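/- Let d be symmetric nonnegative with the α-relaxed triangle inequality (α ≥ 1), f monotone submodular nonnegative with f(∅) = 0, λ ≥ 0, and φ(X) = f(X) + λ·d(X), φ'(X) = (1/2)f(X) + λ·d(X). Suppose a sequence ∅ = G_0 ⊂ G_1 ⊂ ⋯ ⊂ G_p with |G_i| = i satisfies the greedy property: for each i < p, the element u_{i+1} ∈ G_{i+1} \ G_i maximizes φ'(G_i ∪ {u}) − φ'(G_i) over all u ∉ G_i. Then for any set O with |O| = p, φ(G_p) ≥ (1/(2α))·φ(O). -/

import Mathlib

open Finset

set_option linter.unusedSectionVars false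
set_option linter.unusedVariables false
set_option maxHeartbeats 1000000

noncomputable def dSet {U : Type*} (d : U → U → ℝ) (X : Finset U) : ℝ :=
  (∑ u ∈ X, ∑ v ∈ X, d u v) / 2

noncomputable def dCross {U : Type*} (d : U → U → ℝ) (X Y : Finset U) : ℝ :=
  ∑ u ∈ X, ∑ v ∈ Y, d u v

section Aux
variable {U : Type*} [DecidableEq U] (d : U → U → ℝ) (α : ℝ)

lemma dCross_nonneg (hnn : ∀ u v, 0 ≤ d u v) (X Y : Finset U) : 0 ≤ dCross d X Y :=
  Finset.sum_nonneg fun _ _ => Finset.sum_nonneg fun _ _ => hnn _ _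

lemma dSet_nonneg (hnn : ∀ u v, 0 ≤ d u v) (X : Finset U) : 0 ≤ dSet d X :=
  div_nonneg (Finset.sum_nonneg fun _ _ => Finset.sum_nonneg fun _ _ => hnn _ _) (by norm_num)

lemma dSet_mono (hnn : ∀ u v, 0 ≤ d u v) {X Y : Finset U} (h : X ⊆ Y) :
    dSet d X ≤ dSet d Y := by
  unfold dSet
  have h1 : ∑ u ∈ X, ∑ v ∈ X, d u v ≤ ∑ u ∈ Y, ∑ v ∈ Y, d u v := by
    calc ∑ u ∈ X, ∑ v ∈ X, d u v
        ≤ ∑ u ∈ X, ∑ v ∈ Y, d u v :=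
          Finset.sum_le_sum fun u _ =>
            Finset.sum_le_sum_of_subset_of_nonneg h (fun v _ _ => hnn u v)
      _ ≤ ∑ u ∈ Y, ∑ v ∈ Y, d u v :=
          Finset.sum_le_sum_of_subset_of_nonneg h
            (fun u _ _ => Finset.sum_nonneg fun v _ => hnn u v)
  linarith

lemma dCross_comm (hsymm : ∀ u v, d u v = d v u) (X Y : Finset U) :
    dCross d X Y = dCross d Y X := by
  unfold dCross
  rw [Finset.sum_comm]
  exact Finset.sum_congr rfl fun v _ => Finset.sum_congr rfl fun u _ => hsymm u v

lemma dCross_union_right {Y Z : Finset U} (hYZ : Disjoint Y Z) (X : Finset U) :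
    dCross d X (Y ∪ Z) = dCross d X Y + dCross d X Z := by
  unfold dCross
  rw [← Finset.sum_add_distrib]
  exact Finset.sum_congr rfl fun u _ => Finset.sum_union hYZ

lemma dSet_union (hsymm : ∀ u v, d u v = d v u) {A B : Finset U} (hAB : Disjoint A B) :
    dSet d (A ∪ B) = dSet d A + dSet d B + dCross d A B := by
  unfold dSet
  rw [Finset.sum_union hAB]
  simp_rw [Finset.sum_union hAB]
  rw [Finset.sum_add_distrib, Finset.sum_add_distrib]
  have h2 : ∑ u ∈ B, ∑ v ∈ A, d u v = dCross d A B := (dCross_comm d hsymm B A) ▸ rfl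
  have h3 : ∑ u ∈ A, ∑ v ∈ B, d u v = dCross d A B := rfl
  rw [h3]
  unfold dCross at h2 ⊢
  rw [h2]
  ring

lemma dSet_insert (hsymm : ∀ u v, d u v = d v u) (hself : ∀ u, d u u = 0)
    {v : U} {S : Finset U} (hv : v ∉ S) :
    dSet d (insert v S) = dSet d S + ∑ g ∈ S, d v g := by
  unfold dSet
  rw [Finset.sum_insert hv]
  simp_rw [Finset.sum_insert hv]
  rw [hself v, Finset.sum_add_distrib]
  have h2 : ∑ u ∈ S, d u v = ∑ u ∈ S, d v u := Finset.sum_congr rfl fun u _ => hsymm u v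
  rw [h2]
  ring

lemma tri_sum (hsymm : ∀ u v, d u v = d v u) (hself : ∀ u, d u u = 0)
    (htri : ∀ u v w, d u v ≤ α * (d v w + d w u)) (C : Finset U) (g : U) :
    ∑ x ∈ C, ∑ y ∈ C, d x y ≤ 2 * α * ((C.card : ℝ) - 1) * ∑ y ∈ C, d y g := by
  have key : ∀ x ∈ C, ∑ y ∈ C, d x y
      ≤ α * ((∑ y ∈ C, d y g) - d x g) + α * ((C.card : ℝ) - 1) * d g x := by
    intro x hx
    have h1 : ∑ y ∈ C, d x y = ∑ y ∈ C.erase x, d x y := by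
      rw [← Finset.sum_erase_add C _ hx, hself, add_zero]
    have hcpos : 1 ≤ C.card := Finset.card_pos.mpr ⟨x, hx⟩
    have hcarderase : ((C.erase x).card : ℝ) = (C.card : ℝ) - 1 := by
      rw [Finset.card_erase_of_mem hx]
      push_cast [Nat.cast_sub hcpos]
      ring
    have h2 : ∑ y ∈ C.erase x, d x y ≤ ∑ y ∈ C.erase x, α * (d y g + d g x) :=
      Finset.sum_le_sum fun y _ => htri x y g
    have h3 : ∑ y ∈ C.erase x, α * (d y g + d g x)
        = α * ((∑ y ∈ C, d y g) - d x g) + α * ((C.card : ℝ) - 1) * d g x := by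
      simp_rw [mul_add]
      rw [Finset.sum_add_distrib, ← Finset.mul_sum, Finset.sum_const, nsmul_eq_mul,
        hcarderase]
      have h4 : ∑ y ∈ C.erase x, d y g = (∑ y ∈ C, d y g) - d x g := by
        rw [← Finset.sum_erase_add C _ hx]; ring
      rw [h4]; ring
    rw [h1]; rw [h3] at h2; exact h2
  calc ∑ x ∈ C, ∑ y ∈ C, d x y
      ≤ ∑ x ∈ C, (α * ((∑ y ∈ C, d y g) - d x g) + α * ((C.card : ℝ) - 1) * d g x) :=
        Finset.sum_le_sum key
    _ = 2 * α * ((C.card : ℝ) - 1) * ∑ y ∈ C, d y g := by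
        have hT : ∑ x ∈ C, d g x = ∑ x ∈ C, d x g := Finset.sum_congr rfl fun x _ => hsymm g x
        rw [Finset.sum_add_distrib, ← Finset.mul_sum, ← Finset.mul_sum, hT,
          Finset.sum_sub_distrib, Finset.sum_const, nsmul_eq_mul]
        ring

lemma crowd (hsymm : ∀ u v, d u v = d v u) (hself : ∀ u, d u u = 0)
    (htri : ∀ u v w, d u v ≤ α * (d v w + d w u)) (C S : Finset U) :
    (S.card : ℝ) * (2 * dSet d C) ≤ 2 * α * ((C.card : ℝ) - 1) * dCross d C S := by
  have h2 : (2 : ℝ) * dSet d C = ∑ x ∈ C, ∑ y ∈ C, d x y := by unfold dSet; ring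
  have h := Finset.sum_le_sum (f := fun _ : U => ∑ x ∈ C, ∑ y ∈ C, d x y)
    (g := fun g => 2 * α * ((C.card : ℝ) - 1) * ∑ y ∈ C, d y g)
    (fun g (_ : g ∈ S) => tri_sum d α hsymm hself htri C g)
  rw [Finset.sum_const, nsmul_eq_mul, ← Finset.mul_sum] at h
  have hc : ∑ g ∈ S, ∑ y ∈ C, d y g = dCross d C S := Finset.sum_comm
  rw [hc] at h
  rw [h2]
  exact h

lemma key_arith (α c k e i p sC sK X Y : ℝ) (hα : 1 ≤ α)
    (hck : c + k = p) (hek : e + k = i) (hip : i ≤ p)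
    (hknn : 0 ≤ k) (hcnn : 0 ≤ c) (hinn : 0 ≤ i) (hpnn : 0 ≤ p)
    (hXnn : 0 ≤ X) (hYnn : 0 ≤ Y) (hsCnn : 0 ≤ sC) (hsKnn : 0 ≤ sK)
    (R1a : e * sC ≤ α * (c - 1) * Y) (R1b : k * sC ≤ α * (c - 1) * X)
    (R2 : c * sK ≤ α * (k - 1) * X) :
    c * i * (sC + sK + X) ≤ α * p * (p - 1) * (Y + X) := by
  subst hck hek
  have A1 : (c + k) * (e * sC) ≤ (c + k) * (α * (c - 1) * Y) :=
    mul_le_mul_of_nonneg_left R1a (by linarith)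
  have A2 : (c - e) * (k * sC) ≤ (c - e) * (α * (c - 1) * X) :=
    mul_le_mul_of_nonneg_left R1b (by linarith)
  have A3 : (e + k) * (c * sK) ≤ (e + k) * (α * (k - 1) * X) :=
    mul_le_mul_of_nonneg_left R2 (by linarith)
  have A4 : 0 ≤ (α - 1) * (c * (e + k) * X) :=
    mul_nonneg (by linarith) (by positivity)
  have A5 : 0 ≤ α * (c + k) * k * Y := by positivity
  have A6 : 0 ≤ α * k * (c - e) * X :=
    mul_nonneg (mul_nonneg (mul_nonneg (by linarith) hknn) (by linarith)) hXnn
  nlinarith [A1, A2, A3, A4, A5, A6]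

lemma key_lemma (hα : 1 ≤ α) (hnn : ∀ u v, 0 ≤ d u v) (hsymm : ∀ u v, d u v = d v u)
    (hself : ∀ u, d u u = 0) (htri : ∀ u v w, d u v ≤ α * (d v w + d w u))
    (Gs O : Finset U) (hGO : Gs.card ≤ O.card) :
    ((O \ Gs).card : ℝ) * (Gs.card : ℝ) * dSet d O
      ≤ α * (O.card : ℝ) * ((O.card : ℝ) - 1) * dCross d (O \ Gs) Gs := by
  classical
  set C := O \ Gs with hCdef
  set K := O ∩ Gs with hKdef
  set E := Gs \ O with hEdef
  have hdCK : Disjoint C K := Finset.disjoint_sdiff_inter O Gs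
  have hOCK : C ∪ K = O := Finset.sdiff_union_inter O Gs
  have hdEK : Disjoint E (Gs ∩ O) := Finset.disjoint_sdiff_inter Gs O
  have hGEK : E ∪ (Gs ∩ O) = Gs := Finset.sdiff_union_inter Gs O
  have hKK : Gs ∩ O = K := Finset.inter_comm Gs O
  have hcard1 : ((C.card : ℝ)) + (K.card : ℝ) = (O.card : ℝ) := by
    have := Finset.card_sdiff_add_card_inter O Gs
    push_cast [← this]; ring
  have hcard2 : ((E.card : ℝ)) + (K.card : ℝ) = (Gs.card : ℝ) := by
    have := Finset.card_sdiff_add_card_inter Gs O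
    rw [hKK] at this
    push_cast [← this]; ring
  set c := (C.card : ℝ)
  set k := (K.card : ℝ)
  set e := (E.card : ℝ)
  set i := (Gs.card : ℝ)
  set p := (O.card : ℝ)
  set sC := dSet d C
  set sK := dSet d K
  set X := dCross d C K
  set Y := dCross d C E
  have hip : i ≤ p := by unfold i p; exact_mod_cast hGO
  have hknn : 0 ≤ k := Nat.cast_nonneg _
  have hcnn : 0 ≤ c := Nat.cast_nonneg _
  have hinn : 0 ≤ i := Nat.cast_nonneg _
  have hpnn : 0 ≤ p := Nat.cast_nonneg _
  have hXnn : 0 ≤ X := dCross_nonneg d hnn C K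
  have hYnn : 0 ≤ Y := dCross_nonneg d hnn C E
  have hsCnn : 0 ≤ sC := dSet_nonneg d hnn C
  have hsKnn : 0 ≤ sK := dSet_nonneg d hnn K
  have hsetO : dSet d O = sC + sK + X := by
    rw [← hOCK]; exact dSet_union d hsymm hdCK
  have hcrossG : dCross d C Gs = Y + X := by
    conv_lhs => rw [← hGEK]
    rw [dCross_union_right d hdEK C, hKK]
  have R1a : e * sC ≤ α * (c - 1) * Y := by
    have := crowd d α hsymm hself htri C E
    unfold Y sC e c at *
    linarith
  have R1b : k * sC ≤ α * (c - 1) * X := by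
    have := crowd d α hsymm hself htri C K
    linarith
  have R2 : c * sK ≤ α * (k - 1) * X := by
    have h := crowd d α hsymm hself htri K C
    have hcc : dCross d K C = X := dCross_comm d hsymm K C
    rw [hcc] at h
    linarith
  rw [hsetO, hcrossG]
  exact key_arith α c k e i p sC sK X Y hα hcard1 hcard2 hip hknn hcnn hinn hpnn
    hXnn hYnn hsCnn hsKnn R1a R1b R2

lemma submod_marg (f : Finset U → ℝ)
    (hsub : ∀ X Y, f (X ∪ Y) + f (X ∩ Y) ≤ f X + f Y) (Gs : Finset U) :
    ∀ C : Finset U, Disjoint C Gs →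
      f (Gs ∪ C) - f Gs ≤ ∑ v ∈ C, (f (insert v Gs) - f Gs) := by
  intro C
  induction C using Finset.induction_on with
  | empty => intro _; simp
  | insert a s ha ih =>
    intro hdisj
    have haG : a ∉ Gs := (Finset.disjoint_insert_left.mp hdisj).1
    have hdisj' : Disjoint s Gs := (Finset.disjoint_insert_left.mp hdisj).2
    have hXY := hsub (Gs ∪ s) (insert a Gs)
    have h1 : (Gs ∪ s) ∪ insert a Gs = insert a (Gs ∪ s) := by
      ext x
      simp only [Finset.mem_union, Finset.mem_insert]
      tauto
    have h2 : (Gs ∪ s) ∩ insert a Gs = Gs := by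
      ext x
      simp only [Finset.mem_inter, Finset.mem_union, Finset.mem_insert]
      constructor
      · rintro ⟨hx1, hx2⟩
        rcases hx2 with rfl | hx2
        · rcases hx1 with hx1 | hx1
          · exact absurd hx1 haG
          · exact absurd hx1 ha
        · exact hx2
      · intro hx
        exact ⟨Or.inl hx, Or.inr hx⟩
    have h3 : Gs ∪ insert a s = insert a (Gs ∪ s) := Finset.union_insert a Gs s
    rw [h3, Finset.sum_insert ha]
    rw [h1, h2] at hXY
    have hih := ih hdisj'
    linarith

end Aux

theorem stmt13 {U : Type*} [DecidableEq U] (d : U → U → ℝ) (α : ℝ) (hα : 1 ≤ α)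
    (hnn : ∀ u v, 0 ≤ d u v) (hsymm : ∀ u v, d u v = d v u)
    (hself : ∀ u, d u u = 0)
    (htri : ∀ u v w, d u v ≤ α * (d v w + d w u))
    (f : Finset U → ℝ) (hfnn : ∀ X, 0 ≤ f X) (hf0 : f ∅ = 0)
    (hmono : ∀ X Y, X ⊆ Y → f X ≤ f Y)
    (hsub : ∀ X Y, f (X ∪ Y) + f (X ∩ Y) ≤ f X + f Y)
    (lam : ℝ) (hlam : 0 ≤ lam) (p : ℕ)
    (G : ℕ → Finset U) (u : ℕ → U) (hG0 : G 0 = ∅)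
    (hstep : ∀ i < p, G (i + 1) = insert (u (i + 1)) (G i) ∧ u (i + 1) ∉ G i)
    (hgreedy : ∀ i < p, ∀ v ∉ G i,
      ((1 / 2) * f (insert (u (i + 1)) (G i)) + lam * dSet d (insert (u (i + 1)) (G i)))
          - ((1 / 2) * f (G i) + lam * dSet d (G i))
        ≥ ((1 / 2) * f (insert v (G i)) + lam * dSet d (insert v (G i)))
          - ((1 / 2) * f (G i) + lam * dSet d (G i)))
    (O : Finset U) (hO : O.card = p) :
    f (G p) + lam * dSet d (G p) ≥ (1 / (2 * α)) * (f O + lam * dSet d O) := by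
  classical
  have hαpos : (0 : ℝ) < α := by linarith
  have hfOnn : 0 ≤ f O := hfnn O
  have hsOnn : 0 ≤ dSet d O := dSet_nonneg d hnn O
  have hsGpnn : 0 ≤ dSet d (G p) := dSet_nonneg d hnn (G p)
  -- chain facts
  have hGcard : ∀ i, i ≤ p → (G i).card = i := by
    intro i
    induction i with
    | zero => intro _; rw [hG0]; rfl
    | succ n ih =>
      intro h
      have hn : n < p := by omega
      rw [(hstep n hn).1, Finset.card_insert_of_notMem (hstep n hn).2, ih (by omega)]
  have hGstep : ∀ i, i < p → G i ⊆ G (i + 1) := by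
    intro i hi
    rw [(hstep i hi).1]
    exact Finset.subset_insert _ _
  have hGmonoaux : ∀ j, j ≤ p → ∀ i, i ≤ j → G i ⊆ G j := by
    intro j
    induction j with
    | zero =>
      intro _ i hi
      have : i = 0 := by omega
      subst this; exact Finset.Subset.refl _
    | succ n ih =>
      intro hn i hi
      rcases Nat.lt_or_ge i (n + 1) with h | h
      · exact (ih (by omega) i (by omega)).trans (hGstep n (by omega))
      · have : i = n + 1 := by omega
        subst this; exact Finset.Subset.refl _
  have hGmono : ∀ i, i ≤ p → G i ⊆ G p := fun i hi => hGmonoaux p le_rfl i hi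
  -- trivial case p = 0
  by_cases hp0 : p = 0
  · subst hp0
    have hOe : O = ∅ := Finset.card_eq_zero.mp hO
    subst hOe
    rw [hG0, hf0]
    have : dSet d (∅ : Finset U) = 0 := by unfold dSet; simp
    rw [this]
    simp
  -- case O ⊆ some G i
  by_cases hOsub : ∃ i, i < p ∧ O ⊆ G i
  · obtain ⟨i, hi, hOs⟩ := hOsub
    have hOGp : O ⊆ G p := hOs.trans (hGmono i (le_of_lt hi))
    have h1 : f O ≤ f (G p) := hmono _ _ hOGp
    have h2 : dSet d O ≤ dSet d (G p) := dSet_mono d hnn hOGp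
    have h3 : 0 ≤ f O + lam * dSet d O := by positivity
    have h4 : 1 / (2 * α) ≤ 1 := by
      rw [div_le_one (by linarith)]
      linarith
    have h5 : (1 / (2 * α)) * (f O + lam * dSet d O) ≤ f O + lam * dSet d O := by
      nlinarith
    have h6 : lam * dSet d O ≤ lam * dSet d (G p) := mul_le_mul_of_nonneg_left h2 hlam
    linarith
  -- main case
  push_neg at hOsub
  have hCne : ∀ i, i < p → (O \ G i).Nonempty := by
    intro i hi
    rw [Finset.sdiff_nonempty]
    exact hOsub i hi
  have hp1 : 1 ≤ p := by omega
  have hpR : (0 : ℝ) < (p : ℝ) := by exact_mod_cast hp1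
  set B := f O - f (G p) with hBdef
  set Q := lam * dSet d O / (α * (p : ℝ) * ((p : ℝ) - 1)) with hQdef
  -- per-step inequality
  have hstepineq : ∀ i ∈ Finset.range p,
      (1 / (2 * (p : ℝ))) * B + (i : ℝ) * Q
        ≤ ((1 / 2) * f (G (i + 1)) + lam * dSet d (G (i + 1)))
          - ((1 / 2) * f (G i) + lam * dSet d (G i)) := by
    intro i hiR
    have hi : i < p := Finset.mem_range.mp hiR
    obtain ⟨hGi1, hui⟩ := hstep i hi
    set C := O \ G i with hCdef
    have hCne' : C.Nonempty := hCne i hi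
    have hcposN : 0 < C.card := Finset.card_pos.mpr hCne'
    have hcpos : (0 : ℝ) < (C.card : ℝ) := by exact_mod_cast hcposN
    have hcard_le : (C.card : ℝ) ≤ (p : ℝ) := by
      have : C.card ≤ O.card := Finset.card_le_card Finset.sdiff_subset
      rw [hO] at this
      exact_mod_cast this
    set D := ((1 / 2) * f (G (i + 1)) + lam * dSet d (G (i + 1)))
      - ((1 / 2) * f (G i) + lam * dSet d (G i)) with hDdef
    have hmax : ∀ v ∈ C,
        ((1 / 2) * f (insert v (G i)) + lam * dSet d (insert v (G i)))
          - ((1 / 2) * f (G i) + lam * dSet d (G i)) ≤ D := by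
      intro v hv
      have hvG : v ∉ G i := (Finset.mem_sdiff.mp hv).2
      have hg := hgreedy i hi v hvG
      rw [hDdef, hGi1]
      exact hg
    have hsum1 : ∑ v ∈ C, (((1 / 2) * f (insert v (G i)) + lam * dSet d (insert v (G i)))
          - ((1 / 2) * f (G i) + lam * dSet d (G i))) ≤ (C.card : ℝ) * D := by
      calc ∑ v ∈ C, (((1 / 2) * f (insert v (G i)) + lam * dSet d (insert v (G i)))
            - ((1 / 2) * f (G i) + lam * dSet d (G i)))
          ≤ ∑ _v ∈ C, D := Finset.sum_le_sum hmax
        _ = (C.card : ℝ) * D := by rw [Finset.sum_const, nsmul_eq_mul]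
    set S := ∑ v ∈ C, (f (insert v (G i)) - f (G i)) with hSdef
    have hexp : ∑ v ∈ C, (((1 / 2) * f (insert v (G i)) + lam * dSet d (insert v (G i)))
          - ((1 / 2) * f (G i) + lam * dSet d (G i)))
        = (1 / 2) * S + lam * dCross d C (G i) := by
      have hterm : ∀ v ∈ C,
          ((1 / 2) * f (insert v (G i)) + lam * dSet d (insert v (G i)))
            - ((1 / 2) * f (G i) + lam * dSet d (G i))
          = (1 / 2) * (f (insert v (G i)) - f (G i)) + lam * ∑ g ∈ G i, d v g := by
        intro v hv
        rw [dSet_insert d hsymm hself (Finset.mem_sdiff.mp hv).2]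
        ring
      rw [Finset.sum_congr rfl hterm, Finset.sum_add_distrib, ← Finset.mul_sum,
        ← Finset.mul_sum]
      rfl
    -- f part
    have hfm : B ≤ S := by
      have h1 := submod_marg f hsub (G i) C Finset.sdiff_disjoint
      have h2 : G i ∪ C = G i ∪ O := Finset.union_sdiff_self_eq_union
      rw [h2] at h1
      have h3 : f O ≤ f (G i ∪ O) := hmono _ _ Finset.subset_union_right
      have h4 : f (G i) ≤ f (G p) := hmono _ _ (hGmono i (le_of_lt hi))
      rw [hBdef]
      linarith
    have hSnn : 0 ≤ S :=
      Finset.sum_nonneg fun v hv =>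
        sub_nonneg.mpr (hmono _ _ (Finset.subset_insert _ _))
    have hXnn : 0 ≤ dCross d C (G i) := dCross_nonneg d hnn C (G i)
    -- key lemma
    have hkey : (C.card : ℝ) * (i : ℝ) * dSet d O
        ≤ α * (p : ℝ) * ((p : ℝ) - 1) * dCross d C (G i) := by
      have h := key_lemma d α hα hnn hsymm hself htri (G i) O
        (by rw [hGcard i (le_of_lt hi), hO]; exact le_of_lt hi)
      rw [hGcard i (le_of_lt hi), hO] at h
      exact h
    -- Q part
    have hQ2 : (C.card : ℝ) * ((i : ℝ) * Q) ≤ lam * dCross d C (G i) := by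
      by_cases hp2 : 2 ≤ p
      · have hp2R : (2 : ℝ) ≤ (p : ℝ) := by exact_mod_cast hp2
        have hden : (0 : ℝ) < α * (p : ℝ) * ((p : ℝ) - 1) :=
          mul_pos (mul_pos hαpos hpR) (by linarith)
        have heq : (C.card : ℝ) * ((i : ℝ) * Q)
            = lam * ((C.card : ℝ) * (i : ℝ) * dSet d O) / (α * (p : ℝ) * ((p : ℝ) - 1)) := by
          rw [hQdef]; ring
        rw [heq, div_le_iff₀ hden]
        have h := mul_le_mul_of_nonneg_left hkey hlam
        nlinarith [h]
      · have hip0 : i = 0 := by omega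
        subst hip0
        simp only [Nat.cast_zero, zero_mul, mul_zero]
        positivity
    -- conclude
    have hc_le : B * (C.card : ℝ) ≤ S * (p : ℝ) := by
      nlinarith [hfm, hSnn, hcard_le, hcpos]
    have hmain : (C.card : ℝ) * ((1 / (2 * (p : ℝ))) * B + (i : ℝ) * Q) ≤ (C.card : ℝ) * D := by
      have hA : (C.card : ℝ) * ((1 / (2 * (p : ℝ))) * B) ≤ (1 / 2) * S := by
        have h1 : (C.card : ℝ) * ((1 / (2 * (p : ℝ))) * B)
            = (1 / (2 * (p : ℝ))) * (B * (C.card : ℝ)) := by ring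
        have h2 : (1 / (2 * (p : ℝ))) * (B * (C.card : ℝ))
            ≤ (1 / (2 * (p : ℝ))) * (S * (p : ℝ)) :=
          mul_le_mul_of_nonneg_left hc_le (by positivity)
        have h3 : (1 / (2 * (p : ℝ))) * (S * (p : ℝ)) = (1 / 2) * S := by
          field_simp
        rw [h1]
        rw [h3] at h2
        exact h2
      have hB2 : (C.card : ℝ) * ((i : ℝ) * Q) ≤ lam * dCross d C (G i) := hQ2
      calc (C.card : ℝ) * ((1 / (2 * (p : ℝ))) * B + (i : ℝ) * Q)
          = (C.card : ℝ) * ((1 / (2 * (p : ℝ))) * B) + (C.card : ℝ) * ((i : ℝ) * Q) := by ring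
        _ ≤ (1 / 2) * S + lam * dCross d C (G i) := by linarith
        _ ≤ (C.card : ℝ) * D := by rw [← hexp]; exact hsum1
    exact le_of_mul_le_mul_left hmain hcpos
  -- telescoping
  have htel : ∑ i ∈ Finset.range p,
      (((1 / 2) * f (G (i + 1)) + lam * dSet d (G (i + 1)))
        - ((1 / 2) * f (G i) + lam * dSet d (G i)))
      = ((1 / 2) * f (G p) + lam * dSet d (G p))
        - ((1 / 2) * f (G 0) + lam * dSet d (G 0)) :=
    Finset.sum_range_sub (fun j => (1 / 2) * f (G j) + lam * dSet d (G j)) p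
  have hsum_ge : (1 / 2) * B + lam * dSet d O / (2 * α)
      ≤ ((1 / 2) * f (G p) + lam * dSet d (G p))
        - ((1 / 2) * f (G 0) + lam * dSet d (G 0)) := by
    have h1 : ∑ i ∈ Finset.range p, ((1 / (2 * (p : ℝ))) * B + (i : ℝ) * Q)
        ≤ ∑ i ∈ Finset.range p,
          (((1 / 2) * f (G (i + 1)) + lam * dSet d (G (i + 1)))
            - ((1 / 2) * f (G i) + lam * dSet d (G i))) :=
      Finset.sum_le_sum hstepineq
    rw [htel] at h1
    have hgauss : (∑ x ∈ Finset.range p, (x : ℝ)) = (p : ℝ) * ((p : ℝ) - 1) / 2 := by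
      have h := Finset.sum_range_id_mul_two p
      have h2 : ((∑ i ∈ Finset.range p, i : ℕ) : ℝ) * 2 = (p : ℝ) * ((p - 1 : ℕ) : ℝ) := by
        exact_mod_cast congrArg (fun n : ℕ => (n : ℝ)) h
      rw [Nat.cast_sub hp1] at h2
      push_cast at h2 ⊢
      linarith
    have h2 : ∑ i ∈ Finset.range p, ((1 / (2 * (p : ℝ))) * B + (i : ℝ) * Q)
        = (1 / 2) * B + ((p : ℝ) * ((p : ℝ) - 1) / 2) * Q := by
      rw [Finset.sum_add_distrib, Finset.sum_const, Finset.card_range, nsmul_eq_mul,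
        ← Finset.sum_mul, hgauss]
      have : (p : ℝ) * ((1 / (2 * (p : ℝ))) * B) = (1 / 2) * B := by
        field_simp
      rw [this]
    have h3 : ((p : ℝ) * ((p : ℝ) - 1) / 2) * Q = lam * dSet d O / (2 * α) := by
      by_cases hp2 : 2 ≤ p
      · have hp2R : (2 : ℝ) ≤ (p : ℝ) := by exact_mod_cast hp2
        rw [hQdef]
        have hα0 : α ≠ 0 := by linarith
        have hpne : (p : ℝ) ≠ 0 := by linarith
        have hpm1 : (p : ℝ) - 1 ≠ 0 := by linarith
        field_simp
      · have hpeq : p = 1 := by omega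
        have hsO0 : dSet d O = 0 := by
          obtain ⟨a, ha⟩ := Finset.card_eq_one.mp (by rw [hO, hpeq])
          rw [ha]
          unfold dSet
          simp [hself]
        rw [hsO0, hQdef, hsO0]
        simp
    rw [h2, h3] at h1
    exact h1
  -- final assembly
  have hG0v : (1 / 2) * f (G 0) + lam * dSet d (G 0) = 0 := by
    rw [hG0, hf0]
    have : dSet d (∅ : Finset U) = 0 := by unfold dSet; simp
    rw [this]
    ring
  rw [hG0v, sub_zero] at hsum_ge
  have h12 : 1 / (2 * α) ≤ 1 / 2 := by
    rw [div_le_div_iff₀ (by linarith) (by norm_num)]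
    linarith
  have hfO12 : (1 / (2 * α)) * f O ≤ (1 / 2) * f O :=
    mul_le_mul_of_nonneg_right h12 hfOnn
  have heq2 : (1 / (2 * α)) * (f O + lam * dSet d O)
      = (1 / (2 * α)) * f O + lam * dSet d O / (2 * α) := by
    ring
  rw [ge_iff_le, heq2]
  rw [hBdef] at hsum_ge
  linarith
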